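/- arXiv:2012.06961 — 2 statements merged into one kernel-verified Lean document; each statement's English description precedes it below -/
import Mathlib

section
/- Consider two offline LPs on horizon T = 2c with capacity c: (A) maximize ∑_{t≤c} x_t + 2∑_{t>c} x_t and (B) maximize ∑_{t≤c} x_t, both subject to ∑_{t=1}^T x_t ≤ c and 0 ≤ x_t ≤ 1. Any online policy π that chooses x_t based only on past information produces the same decisions for the first c periods in both scenarios; letting S = ∑_{t=1}^c x_t(π) ∈ [0, c], the regret in scenario (A) is at least S and in (B) at least c − S. Hence max of the two regrets is at least c/2 = T/4. -/
/-- Adversarial Ω(T) lower bound construction: an online policy makes the same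
first-half decisions in the two scenarios; its regret in scenario (A) is at least
`S`, in scenario (B) at least `c - S`, so the worst of the two is at least `c/2`. -/
theorem stmt7 (c : ℕ) (hc : 1 ≤ c) (xA xB : ℕ → ℝ)
    (hA0 : ∀ t, 0 ≤ xA t) (hA1 : ∀ t, xA t ≤ 1)
    (hB0 : ∀ t, 0 ≤ xB t) (hB1 : ∀ t, xB t ≤ 1)
    (hAfeas : ∑ t ∈ Finset.Icc 1 (2 * c), xA t ≤ (c : ℝ))
    (hBfeas : ∑ t ∈ Finset.Icc 1 (2 * c), xB t ≤ (c : ℝ))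
    (hsame : ∀ t, t ≤ c → xA t = xB t) :
    (∑ t ∈ Finset.Icc 1 c, xA t)
        ≤ 2 * (c : ℝ) - (∑ t ∈ Finset.Icc 1 c, xA t
            + 2 * ∑ t ∈ Finset.Icc (c + 1) (2 * c), xA t) ∧
    (c : ℝ) - (∑ t ∈ Finset.Icc 1 c, xA t)
        ≤ (c : ℝ) - (∑ t ∈ Finset.Icc 1 c, xB t) ∧
    (c : ℝ) / 2 ≤
      max (2 * (c : ℝ) - (∑ t ∈ Finset.Icc 1 c, xA t
            + 2 * ∑ t ∈ Finset.Icc (c + 1) (2 * c), xA t))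
          ((c : ℝ) - (∑ t ∈ Finset.Icc 1 c, xB t)) := by
  have hsplit : (∑ t ∈ Finset.Icc 1 c, xA t) + (∑ t ∈ Finset.Icc (c + 1) (2 * c), xA t)
      = ∑ t ∈ Finset.Icc 1 (2 * c), xA t := by
    rw [show Finset.Icc 1 c = Finset.Ioc 0 c from Finset.Icc_add_one_left_eq_Ioc 0 c,
        show Finset.Icc (c + 1) (2 * c) = Finset.Ioc c (2 * c) from
          Finset.Icc_add_one_left_eq_Ioc c (2 * c),
        show Finset.Icc 1 (2 * c) = Finset.Ioc 0 (2 * c) from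
          Finset.Icc_add_one_left_eq_Ioc 0 (2 * c)]
    exact Finset.sum_Ioc_consecutive _ (Nat.zero_le c) (by omega)
  set S := ∑ t ∈ Finset.Icc 1 c, xA t with hS
  set R := ∑ t ∈ Finset.Icc (c + 1) (2 * c), xA t with hR
  have hSR : S + R ≤ (c : ℝ) := by rw [hsplit]; exact hAfeas
  have hS0 : 0 ≤ S := Finset.sum_nonneg fun t _ => hA0 t
  have hSc : S ≤ (c : ℝ) := by
    calc S ≤ ∑ t ∈ Finset.Icc 1 c, (1 : ℝ) := Finset.sum_le_sum fun t _ => hA1 t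
    _ = (c : ℝ) := by simp
  have hBeq : (∑ t ∈ Finset.Icc 1 c, xB t) = S := by
    rw [hS]
    exact Finset.sum_congr rfl fun t ht => (hsame t (Finset.mem_Icc.mp ht).2).symm
  refine ⟨by linarith, by rw [hBeq], ?_⟩
  rw [hBeq]
  rcases le_total S ((c : ℝ) / 2) with h | h
  · exact le_max_of_le_right (by linarith)
  · exact le_max_of_le_left (by linarith)
end

section
/- Let p_l ∈ (Fin m → ℝ) be nonnegative vectors updated in batches: p_{l+1} = (p_l + η ∑_{t=(l-1)K+1}^{lK} (g_t − γ_t)) ∨ 0, with g_t, γ_t ∈ [0,1]^m, p_1 = 0, and η > 0. Suppose coordinate i satisfies: whenever (p_l)_i > q we have (g_t)_i = 0 for all t in batch l. Then ‖p_l‖_∞ ≤ q + ηK for all l. -/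
/-- Boundedness of the dual variable under batched updates: each batch update can
increase a coordinate by at most `η K`, and once a coordinate exceeds `q` the
consumptions in that batch vanish, so all iterates satisfy `‖p l‖_∞ ≤ q + η K`. -/
theorem stmt16 (m K : ℕ) (hK : 1 ≤ K) (η q : ℝ) (hη : 0 < η) (hq : 0 ≤ q)
    (p : ℕ → Fin m → ℝ) (g γ : ℕ → Fin m → ℝ)
    (hg : ∀ t i, g t i ∈ Set.Icc (0 : ℝ) 1)
    (hγ : ∀ t i, γ t i ∈ Set.Icc (0 : ℝ) 1)
    (h1 : p 1 = 0)
    (hupd : ∀ l, 1 ≤ l → p (l + 1) = fun i =>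
      max (p l i + η * ∑ t ∈ Finset.Icc ((l - 1) * K + 1) (l * K), (g t i - γ t i)) 0)
    (hzero : ∀ l, 1 ≤ l → ∀ i, q < p l i →
      ∀ t ∈ Finset.Icc ((l - 1) * K + 1) (l * K), g t i = 0) :
    ∀ l, 1 ≤ l → ‖p l‖ ≤ q + η * K := by
  have hηK : 0 ≤ η * K := by positivity
  have key : ∀ l, 1 ≤ l → ∀ i, p l i ∈ Set.Icc (0 : ℝ) (q + η * K) := by
    intro l hl
    induction l with
    | zero => omega
    | succ n ih =>
      rcases Nat.eq_or_lt_of_le hl with h | h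
      · intro i
        rw [show n + 1 = 1 from by omega, h1]
        exact ⟨le_refl _, by positivity⟩
      · have hn : 1 ≤ n := by omega
        intro i
        have ihi := ih hn i
        have hcard : (Finset.Icc ((n - 1) * K + 1) (n * K)).card = K := by
          rw [Nat.card_Icc]
          have : (n - 1) * K + K = n * K := by
            cases n with
            | zero => omega
            | succ m => simp [Nat.succ_sub_one, Nat.succ_mul]
          omega
        rw [hupd n hn]
        constructor
        · exact le_max_right _ _
        · simp only
          by_cases hqi : q < p n i
          · have hsum : ∑ t ∈ Finset.Icc ((n - 1) * K + 1) (n * K), (g t i - γ t i) ≤ 0 := by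
              apply Finset.sum_nonpos
              intro t ht
              rw [hzero n hn i hqi t ht]
              have := (hγ t i).1
              linarith
            have : p n i + η * ∑ t ∈ Finset.Icc ((n - 1) * K + 1) (n * K), (g t i - γ t i)
                ≤ p n i := by nlinarith
            have h2 : max (p n i + η * ∑ t ∈ Finset.Icc ((n - 1) * K + 1) (n * K),
                (g t i - γ t i)) 0 ≤ p n i := by
              apply max_le this ihi.1
            linarith [ihi.2]
          · push_neg at hqi
            have hsum : ∑ t ∈ Finset.Icc ((n - 1) * K + 1) (n * K), (g t i - γ t i)
                ≤ (K : ℝ) := by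
              calc _ ≤ ∑ t ∈ Finset.Icc ((n - 1) * K + 1) (n * K), (1 : ℝ) := by
                    apply Finset.sum_le_sum
                    intro t _
                    have := (hg t i).2
                    have := (hγ t i).1
                    linarith
                _ = (K : ℝ) := by rw [Finset.sum_const, hcard]; simp
            have : p n i + η * ∑ t ∈ Finset.Icc ((n - 1) * K + 1) (n * K), (g t i - γ t i)
                ≤ q + η * K := by nlinarith
            exact max_le this (by positivity)
  intro l hl
  rw [pi_norm_le_iff_of_nonneg (by positivity)]
  intro i
  have := key l hl i
  rw [Real.norm_eq_abs, abs_le]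
  constructor <;> [linarith [this.1]; exact this.2]
end
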